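/- Let P be any finite poset, K a ring, and f a K-labeling with Rf ≠ ⊥ and f(0) = f(1) = 1. Assume (Rf)(v) is invertible for every v ∈ P̂. Then Σ_{u ⋖ v in P̂} (Rf)(u) · (Rf)(v)⁻¹ = Σ_{u ⋖ v in P̂} f(u) · f(v)⁻¹, where both sums range over all pairs (u, v) ∈ P̂ × P̂ with u ⋖ v. -/

import Mathlib

open scoped Classical
set_option linter.unusedSectionVars false
set_option maxHeartbeats 1000000


instance {α : Type*} [Fintype α] : Fintype (WithTop α) :=
  inferInstanceAs (Fintype (Option α))

instance {α : Type*} [Fintype α] : Fintype (WithBot α) :=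
  inferInstanceAs (Fintype (Option α))

/-- The poset `P` with an adjoined global minimum `⊥` (called `0` in the paper) and an
adjoined global maximum `⊤` (called `1` in the paper). -/
abbrev PHat (P : Type*) := WithBot (WithTop P)

/-- The embedding of `P` into `PHat P`. -/
def toPHat {P : Type*} (v : P) : PHat P := ((v : WithTop P) : WithBot (WithTop P))

/-- The birational toggle `T_v` at an element `v ∈ P`, as a partial map (modelled via
`Option`) on `K`-labelings `f : PHat P → K`.  It replaces the label at `v` by
`(∑_{u ⋖ v} f u) * (f v)⁻¹ * (∑_{u ⋗ v} (f u)⁻¹)⁻¹` and leaves all other labels unchanged;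
it is undefined (`none`) whenever any of the required inverses fails to exist. -/
noncomputable def toggle {P : Type*} [PartialOrder P] [Fintype P] {K : Type*} [Ring K]
    (v : P) (f : PHat P → K) : Option (PHat P → K) :=
  if IsUnit (f (toPHat v)) ∧ (∀ u : PHat P, toPHat v ⋖ u → IsUnit (f u)) ∧
      IsUnit (∑ u ∈ Finset.univ.filter (fun u : PHat P => toPHat v ⋖ u), Ring.inverse (f u))
  then some (Function.update f (toPHat v)
      ((∑ u ∈ Finset.univ.filter (fun u : PHat P => u ⋖ toPHat v), f u) *
        Ring.inverse (f (toPHat v)) *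
        Ring.inverse
          (∑ u ∈ Finset.univ.filter (fun u : PHat P => toPHat v ⋖ u), Ring.inverse (f u))))
  else none

/-- `toggleList [v₁, …, vₘ] = T_{v₁} ∘ T_{v₂} ∘ ⋯ ∘ T_{vₘ}` as a partial map
(`T_{vₘ}` is applied first); `⊥ = none` propagates through the composition. -/
noncomputable def toggleList {P : Type*} [PartialOrder P] [Fintype P] {K : Type*} [Ring K] :
    List P → (PHat P → K) → Option (PHat P → K)
  | [], f => some f
  | v :: L, f => (toggleList L f).bind (toggle v)

/-- `rowIter L n` is the `n`-fold iteration `R^n` of birational rowmotion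
`R = toggleList L` (for `L` a linear extension of `P`), as a partial map. -/
noncomputable def rowIter {P : Type*} [PartialOrder P] [Fintype P] {K : Type*} [Ring K]
    (L : List P) : ℕ → (PHat P → K) → Option (PHat P → K)
  | 0, f => some f
  | n + 1, f => (toggleList L f).bind (rowIter L n)

/-- A linear extension of a poset `P`: a list of all elements of `P`, each occurring exactly
once, such that `vᵢ < vⱼ` in `P` implies `i < j`. -/
def IsLinearExtension {P : Type*} [PartialOrder P] (L : List P) : Prop :=
  L.Nodup ∧ (∀ v : P, v ∈ L) ∧ L.Pairwise fun a b => ¬ b < a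

section
variable {P : Type*} [PartialOrder P] [Fintype P] {K : Type*} [Ring K]

lemma toPHat_inj : Function.Injective (toPHat (P := P)) := by
  intro a b h; simpa [toPHat] using h

lemma toPHat_ne_bot (a : P) : toPHat a ≠ (⊥ : PHat P) := by simp [toPHat]

lemma toPHat_ne_top (a : P) : toPHat a ≠ (⊤ : PHat P) := by
  intro h
  rw [toPHat, show (⊤ : PHat P) = ((⊤ : WithTop P) : WithBot (WithTop P)) from rfl] at h
  exact WithTop.coe_ne_top (WithBot.coe_inj.mp h)

lemma toPHat_lt_iff {a b : P} : toPHat a < toPHat b ↔ a < b := by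
  rw [toPHat, toPHat, WithBot.coe_lt_coe, WithTop.coe_lt_coe]

lemma pHat_cases (v : PHat P) : v = ⊥ ∨ v = ⊤ ∨ ∃ a : P, v = toPHat a := by
  induction v using WithBot.recBotCoe with
  | bot => exact Or.inl rfl
  | coe w =>
    induction w using WithTop.recTopCoe with
    | top => exact Or.inr (Or.inl rfl)
    | coe a => exact Or.inr (Or.inr ⟨a, rfl⟩)

lemma pHat_not_top_covBy (v : PHat P) : ¬ (⊤ : PHat P) ⋖ v := fun h => not_top_lt h.lt
lemma pHat_not_covBy_bot (v : PHat P) : ¬ v ⋖ (⊥ : PHat P) := fun h => not_lt_bot h.lt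

/-- Lower covers of `toPHat a` are `⊥` or elements of `P` below `a`. -/
lemma lower_cov_cases {a : P} {u : PHat P} (h : u ⋖ toPHat a) :
    u = ⊥ ∨ ∃ b : P, u = toPHat b ∧ b < a := by
  rcases pHat_cases u with h1 | h1 | ⟨b, rfl⟩
  · exact Or.inl h1
  · exact absurd (h1 ▸ h) (pHat_not_top_covBy _)
  · exact Or.inr ⟨b, rfl, toPHat_lt_iff.mp h.lt⟩

lemma sum_pHat {M : Type*} [AddCommMonoid M] (h : PHat P → M) :
    ∑ v : PHat P, h v = h ⊥ + h ⊤ + ∑ a : P, h (toPHat a) := by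
  calc ∑ v : PHat P, h v = ∑ o : Option (WithTop P), h o := rfl
    _ = h none + ∑ w : WithTop P, h (some w) := Fintype.sum_option _
    _ = h none + ∑ o : Option P, h (some o) := rfl
    _ = h none + (h (some none) + ∑ a : P, h (some (some a))) := by
        rw [Fintype.sum_option (fun o : Option P => h (some o))]
    _ = h ⊥ + h ⊤ + ∑ a : P, h (toPHat a) := by rw [add_assoc]; rfl

/-- Structural description of `toggleList` along a (partial) linear extension. -/
lemma toggleList_spec (L : List P) (f : PHat P → K) :
    ∀ (g : PHat P → K), L.Nodup → (L.Pairwise fun a b => ¬ b < a) →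
    toggleList L f = some g →
    (∀ x : PHat P, (∀ v ∈ L, toPHat v ≠ x) → g x = f x) ∧
    (∀ v ∈ L,
      IsUnit (f (toPHat v)) ∧
      IsUnit (∑ u ∈ Finset.univ.filter (fun u : PHat P => toPHat v ⋖ u), Ring.inverse (g u)) ∧
      g (toPHat v) =
        (∑ u ∈ Finset.univ.filter (fun u : PHat P => u ⋖ toPHat v), f u) *
          Ring.inverse (f (toPHat v)) *
          Ring.inverse (∑ u ∈ Finset.univ.filter (fun u : PHat P => toPHat v ⋖ u),
            Ring.inverse (g u))) := by
  induction L with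
  | nil =>
    intro g _ _ h
    rw [toggleList] at h
    obtain rfl : f = g := Option.some_inj.mp h
    exact ⟨fun _ _ => rfl, by simp⟩
  | cons v L ih =>
    intro g hnd hpw h
    rw [toggleList] at h
    obtain ⟨h', hh', htog⟩ := Option.bind_eq_some_iff.mp h
    have hndL : L.Nodup := hnd.of_cons
    have hvL : v ∉ L := (List.nodup_cons.mp hnd).1
    have hpwL : L.Pairwise fun a b => ¬ b < a := hpw.of_cons
    have hhead : ∀ b ∈ L, ¬ b < v := fun b hb => (List.pairwise_cons.mp hpw).1 b hb
    obtain ⟨ha, hb⟩ := ih h' hndL hpwL hh'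
    rw [toggle] at htog
    split_ifs at htog with hc
    obtain ⟨hcu, _, hcs⟩ := hc
    have hg : g = Function.update h' (toPHat v)
        ((∑ u ∈ Finset.univ.filter (fun u : PHat P => u ⋖ toPHat v), h' u) *
          Ring.inverse (h' (toPHat v)) *
          Ring.inverse (∑ u ∈ Finset.univ.filter (fun u : PHat P => toPHat v ⋖ u),
            Ring.inverse (h' u))) := (Option.some_inj.mp htog).symm
    -- g agrees with h' away from toPHat v
    have hgh : ∀ x : PHat P, x ≠ toPHat v → g x = h' x := by
      intro x hx
      rw [hg, Function.update_of_ne hx]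
    -- h' agrees with f at toPHat v
    have hfv : h' (toPHat v) = f (toPHat v) := by
      apply ha
      intro u hu hne
      exact hvL (by rwa [toPHat_inj hne] at hu)
    -- h' agrees with f at lower covers of toPHat v
    have hlow : ∀ u : PHat P, u ⋖ toPHat v → h' u = f u := by
      intro u hu
      rcases lower_cov_cases hu with rfl | ⟨b, rfl, hba⟩
      · exact ha _ (fun w _ => toPHat_ne_bot w)
      · apply ha
        intro w hw hne
        have : b ∈ L := by rwa [toPHat_inj hne] at hw
        exact hhead b this hba
    -- upper covers of toPHat v are fixed by the update
    have hup : ∀ u : PHat P, toPHat v ⋖ u → g u = h' u := by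
      intro u hu
      exact hgh u (fun he => absurd (he ▸ hu).lt (lt_irrefl _))
    have hsumup : (∑ u ∈ Finset.univ.filter (fun u : PHat P => toPHat v ⋖ u),
        Ring.inverse (g u)) = ∑ u ∈ Finset.univ.filter (fun u : PHat P => toPHat v ⋖ u),
        Ring.inverse (h' u) := by
      apply Finset.sum_congr rfl
      intro u hu
      rw [hup u (Finset.mem_filter.mp hu).2]
    have hsumlow : (∑ u ∈ Finset.univ.filter (fun u : PHat P => u ⋖ toPHat v), h' u)
        = ∑ u ∈ Finset.univ.filter (fun u : PHat P => u ⋖ toPHat v), f u := by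
      apply Finset.sum_congr rfl
      intro u hu
      exact hlow u (Finset.mem_filter.mp hu).2
    constructor
    · intro x hx
      have hxv : toPHat v ≠ x := hx v List.mem_cons_self
      rw [hgh x (Ne.symm hxv)]
      exact ha x (fun w hw => hx w (List.mem_cons_of_mem v hw))
    · intro u hu
      rcases List.mem_cons.mp hu with rfl | huL
      · refine ⟨hfv ▸ hcu, by rwa [hsumup], ?_⟩
        rw [hsumup, hg, Function.update_self, hfv, hsumlow]
      · obtain ⟨h1, h2, h3⟩ := hb u huL
        have hguv : g (toPHat u) = h' (toPHat u) := by
          apply hgh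
          intro he
          exact hvL ((toPHat_inj he) ▸ huL)
        have hsu : (∑ w ∈ Finset.univ.filter (fun w : PHat P => toPHat u ⋖ w),
            Ring.inverse (g w)) = ∑ w ∈ Finset.univ.filter (fun w : PHat P => toPHat u ⋖ w),
            Ring.inverse (h' w) := by
          apply Finset.sum_congr rfl
          intro w hw
          have hcov := (Finset.mem_filter.mp hw).2
          have : w ≠ toPHat v := by
            intro he
            subst he
            exact hhead u huL (toPHat_lt_iff.mp hcov.lt)
          rw [hgh w this]
        exact ⟨h1, by rwa [hsu], by rw [hguv, hsu]; exact h3⟩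
end

/-- For any finite poset `P` and any `K`-labeling `f` with `R f ≠ ⊥` and
`f(0) = f(1) = 1`, assuming `(R f)(v)` is invertible for all `v ∈ P̂`, one has
`∑_{u ⋖ v} (R f)(u) · ((R f)(v))⁻¹ = ∑_{u ⋖ v} f(u) · (f(v))⁻¹`, the sums ranging over all
pairs `(u, v) ∈ P̂ × P̂` with `u ⋖ v`. -/
theorem stmt19 {P : Type*} [PartialOrder P] [Fintype P] {K : Type*} [Ring K]
    (L : List P) (hL : IsLinearExtension L) (f g : PHat P → K)
    (hfg : toggleList L f = some g) (h0 : f ⊥ = 1) (h1 : f ⊤ = 1)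
    (hinv : ∀ v : PHat P, IsUnit (g v)) :
    ∑ u : PHat P, ∑ v : PHat P, (if u ⋖ v then g u * Ring.inverse (g v) else 0) =
      ∑ u : PHat P, ∑ v : PHat P, (if u ⋖ v then f u * Ring.inverse (f v) else 0) := by
  obtain ⟨hnd, hall, hpw⟩ := hL
  obtain ⟨hfix, hform⟩ := toggleList_spec L f g hnd hpw hfg
  have hg0 : g ⊥ = 1 := by rw [hfix ⊥ (fun w _ => toPHat_ne_bot w), h0]
  have hg1 : g ⊤ = 1 := by rw [hfix ⊤ (fun w _ => toPHat_ne_top w), h1]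
  -- Identity (I): g(a) · C(a) = A(a) · f(a)⁻¹ for a ∈ P
  have hI : ∀ a : P, g (toPHat a) *
      (∑ w ∈ Finset.univ.filter (fun w : PHat P => toPHat a ⋖ w), Ring.inverse (g w)) =
      (∑ u ∈ Finset.univ.filter (fun u : PHat P => u ⋖ toPHat a), f u) *
        Ring.inverse (f (toPHat a)) := by
    intro a
    obtain ⟨h1u, h2u, heq⟩ := hform a (hall a)
    rw [heq]
    exact Ring.inverse_mul_cancel_right _ _ h2u
  -- Identity (II): g(a)⁻¹ · A(a) = C(a) · f(a) for a ∈ P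
  have hII : ∀ a : P, Ring.inverse (g (toPHat a)) *
      (∑ u ∈ Finset.univ.filter (fun u : PHat P => u ⋖ toPHat a), f u) =
      (∑ w ∈ Finset.univ.filter (fun w : PHat P => toPHat a ⋖ w), Ring.inverse (g w)) *
        f (toPHat a) := by
    intro a
    obtain ⟨h1u, h2u, heq⟩ := hform a (hall a)
    have e0 := congrArg (fun z => Ring.inverse (g (toPHat a)) * z) (hI a)
    rw [← mul_assoc, Ring.inverse_mul_cancel _ (hinv (toPHat a)), one_mul] at e0
    rw [e0, mul_assoc, Ring.inverse_mul_cancel_right _ _ h1u]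
  have hCtop : (∑ w ∈ Finset.univ.filter (fun w : PHat P => (⊤ : PHat P) ⋖ w),
      Ring.inverse (g w)) = 0 :=
    Finset.sum_eq_zero (fun w hw => absurd (Finset.mem_filter.mp hw).2 (pHat_not_top_covBy w))
  have hAbot : (∑ u ∈ Finset.univ.filter (fun u : PHat P => u ⋖ (⊥ : PHat P)), f u) = 0 :=
    Finset.sum_eq_zero (fun u hu => absurd (Finset.mem_filter.mp hu).2 (pHat_not_covBy_bot u))
  have hLHS : (∑ u : PHat P, ∑ v : PHat P, (if u ⋖ v then g u * Ring.inverse (g v) else 0))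
      = ∑ u : PHat P, g u *
          ∑ w ∈ Finset.univ.filter (fun w : PHat P => u ⋖ w), Ring.inverse (g w) := by
    refine Finset.sum_congr rfl (fun u _ => ?_)
    rw [Finset.mul_sum, Finset.sum_filter]
  have hRHS : (∑ u : PHat P, ∑ v : PHat P, (if u ⋖ v then f u * Ring.inverse (f v) else 0))
      = ∑ v : PHat P,
          (∑ u ∈ Finset.univ.filter (fun u : PHat P => u ⋖ v), f u) * Ring.inverse (f v) := by
    rw [Finset.sum_comm]
    refine Finset.sum_congr rfl (fun v _ => ?_)
    rw [Finset.sum_mul, Finset.sum_filter]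
  -- global identity: both sides equal the sum of x(v)·f(u) over cover pairs u ⋖ v
  have hglob : (∑ v : PHat P, Ring.inverse (g v) *
        ∑ u ∈ Finset.univ.filter (fun u : PHat P => u ⋖ v), f u)
      = ∑ u : PHat P,
        (∑ w ∈ Finset.univ.filter (fun w : PHat P => u ⋖ w), Ring.inverse (g w)) * f u := by
    have l1 : ∀ v : PHat P, (Ring.inverse (g v) *
        ∑ u ∈ Finset.univ.filter (fun u : PHat P => u ⋖ v), f u)
        = ∑ u : PHat P, (if u ⋖ v then Ring.inverse (g v) * f u else 0) := by
      intro v; rw [Finset.mul_sum, Finset.sum_filter]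
    have l2 : ∀ u : PHat P,
        ((∑ w ∈ Finset.univ.filter (fun w : PHat P => u ⋖ w), Ring.inverse (g w)) * f u)
        = ∑ v : PHat P, (if u ⋖ v then Ring.inverse (g v) * f u else 0) := by
      intro u; rw [Finset.sum_mul, Finset.sum_filter]
    calc (∑ v : PHat P, Ring.inverse (g v) *
          ∑ u ∈ Finset.univ.filter (fun u : PHat P => u ⋖ v), f u)
        = ∑ v : PHat P, ∑ u : PHat P, (if u ⋖ v then Ring.inverse (g v) * f u else 0) :=
          Finset.sum_congr rfl (fun v _ => l1 v)
      _ = ∑ u : PHat P, ∑ v : PHat P, (if u ⋖ v then Ring.inverse (g v) * f u else 0) :=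
          Finset.sum_comm
      _ = ∑ u : PHat P,
          (∑ w ∈ Finset.univ.filter (fun w : PHat P => u ⋖ w), Ring.inverse (g w)) * f u :=
          (Finset.sum_congr rfl (fun u _ => l2 u)).symm
  -- extract the boundary identity from hglob
  have key : (∑ u ∈ Finset.univ.filter (fun u : PHat P => u ⋖ (⊤ : PHat P)), f u)
      = ∑ w ∈ Finset.univ.filter (fun w : PHat P => (⊥ : PHat P) ⋖ w), Ring.inverse (g w) := by
    rw [sum_pHat (fun v : PHat P => Ring.inverse (g v) *
          ∑ u ∈ Finset.univ.filter (fun u : PHat P => u ⋖ v), f u),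
        sum_pHat (fun u : PHat P =>
          (∑ w ∈ Finset.univ.filter (fun w : PHat P => u ⋖ w), Ring.inverse (g w)) * f u)]
        at hglob
    have hmid2 : (∑ a : P, Ring.inverse (g (toPHat a)) *
          ∑ u ∈ Finset.univ.filter (fun u : PHat P => u ⋖ toPHat a), f u)
        = ∑ a : P,
          (∑ w ∈ Finset.univ.filter (fun w : PHat P => toPHat a ⋖ w), Ring.inverse (g w)) *
            f (toPHat a) :=
      Finset.sum_congr rfl (fun a _ => hII a)
    rw [hAbot, mul_zero, hg1, Ring.inverse_one, one_mul, hCtop, zero_mul, h0, mul_one,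
        hmid2, zero_add, add_zero] at hglob
    exact add_right_cancel hglob
  rw [hLHS, hRHS]
  rw [sum_pHat (fun u : PHat P => g u *
        ∑ w ∈ Finset.univ.filter (fun w : PHat P => u ⋖ w), Ring.inverse (g w)),
      sum_pHat (fun v : PHat P =>
        (∑ u ∈ Finset.univ.filter (fun u : PHat P => u ⋖ v), f u) * Ring.inverse (f v))]
  have hmid : (∑ a : P, g (toPHat a) *
        ∑ w ∈ Finset.univ.filter (fun w : PHat P => toPHat a ⋖ w), Ring.inverse (g w))
      = ∑ a : P,
        (∑ u ∈ Finset.univ.filter (fun u : PHat P => u ⋖ toPHat a), f u) *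
          Ring.inverse (f (toPHat a)) :=
    Finset.sum_congr rfl (fun a _ => hI a)
  rw [hg0, one_mul, hCtop, mul_zero, hAbot, zero_mul, h1, Ring.inverse_one, mul_one,
      hmid, add_zero, zero_add, key]
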